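/- Let a reaction network N be given by α, β ∈ ℕ^{n×ν} with Γ = β − α, and assume N is linear: every reaction j is of one of the forms X_i → X_{i'} with i ≠ i' (column j of α is the standard basis vector e_i and column j of β is e_{i'}), ∅ → X_i (column j of α is zero and column j of β is e_i), or X_i → ∅ (column j of α is e_i and column j of β is zero). Assume further that N admits a strictly positive flux: there exists v ∈ ℝ^ν with v_j > 0 for all j and Γv = 0. Fix a species i and let Ñ be obtained from N by adding a catalyst X_i⁻: Ñ has n+1 species and the same ν reactions, where rows 1,…,n of α̃ and β̃ equal those of α and β, row n+1 of α̃ equals row i of β, and row n+1 of β̃ equals row i of α; set Γ̃ = β̃ − α̃. If N has no critical siphons, then Ñ has no critical siphons. -/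

import Mathlib

open Matrix Finset

/-- The stoichiometry matrix `Γ = β - α` (entries cast to `ℝ`). -/
def gam {n ν : ℕ} (α β : Matrix (Fin n) (Fin ν) ℕ) : Matrix (Fin n) (Fin ν) ℝ :=
  fun i j => (β i j : ℝ) - (α i j : ℝ)

/-- `P` is a siphon: it is nonempty, and every input reaction of a species in `P`
    is an output reaction of some species in `P`. -/
def isSiphon {n ν : ℕ} (α β : Matrix (Fin n) (Fin ν) ℕ) (P : Finset (Fin n)) : Prop :=
  P.Nonempty ∧ ∀ j : Fin ν, (∃ i ∈ P, 0 < β i j) → ∃ i' ∈ P, 0 < α i' j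

/-- `P` is trivial: `P` contains the support of a (nonzero, nonnegative)
    conservation law `d`, i.e. `dᵀ Γ = 0`. -/
def containsConsLaw {n ν : ℕ} (α β : Matrix (Fin n) (Fin ν) ℕ) (P : Finset (Fin n)) : Prop :=
  ∃ d : Fin n → ℝ, d ≠ 0 ∧ (∀ i, 0 ≤ d i) ∧ (∀ j, ∑ i, d i * gam α β i j = 0) ∧
    ∀ i, 0 < d i → i ∈ P

/-- The network has no critical siphons: every siphon is trivial. -/
def noCriticalSiphons {n ν : ℕ} (α β : Matrix (Fin n) (Fin ν) ℕ) : Prop :=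
  ∀ P : Finset (Fin n), isSiphon α β P → containsConsLaw α β P

/-- For a linear network admitting a strictly positive flux, the absence of
critical siphons is preserved by adding a catalyst species `X i⁻`. -/
theorem siphons_add_catalyst_linear (n ν : ℕ) (α β : Matrix (Fin n) (Fin ν) ℕ)
    (hlin : ∀ j : Fin ν,
      (∃ i i' : Fin n, i ≠ i' ∧
        (∀ i'', α i'' j = if i'' = i then 1 else 0) ∧
        (∀ i'', β i'' j = if i'' = i' then 1 else 0)) ∨
      ((∀ i'', α i'' j = 0) ∧
        ∃ i : Fin n, ∀ i'', β i'' j = if i'' = i then 1 else 0) ∨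
      (∃ i : Fin n, (∀ i'', α i'' j = if i'' = i then 1 else 0) ∧
        ∀ i'', β i'' j = 0))
    (hflux : ∃ v : Fin ν → ℝ, (∀ j, 0 < v j) ∧
      ∀ i : Fin n, ∑ j : Fin ν, gam α β i j * v j = 0)
    (i0 : Fin n)
    (αt βt : Matrix (Fin (n + 1)) (Fin ν) ℕ)
    (hαold : ∀ (i : Fin n) (j : Fin ν), αt i.castSucc j = α i j)
    (hβold : ∀ (i : Fin n) (j : Fin ν), βt i.castSucc j = β i j)
    (hαnew : ∀ j : Fin ν, αt (Fin.last n) j = β i0 j)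
    (hβnew : ∀ j : Fin ν, βt (Fin.last n) j = α i0 j)
    (hN : noCriticalSiphons α β) :
    noCriticalSiphons αt βt := by
  obtain ⟨v, hv, hΓv⟩ := hflux
  have hgold : ∀ (i : Fin n) (j : Fin ν), gam αt βt i.castSucc j = gam α β i j := by
    intro i j; simp [gam, hαold, hβold]
  have hglast : ∀ j, gam αt βt (Fin.last n) j = - gam α β i0 j := by
    intro j; simp [gam, hαnew, hβnew]
  intro P hP
  obtain ⟨hPne, hPsi⟩ := hP
  by_cases hlastP : Fin.last n ∈ P
  · by_cases hi0 : i0.castSucc ∈ P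
    · -- conservation law e_{i0} + e_last
      refine ⟨fun k => if k = i0.castSucc then 1 else if k = Fin.last n then 1 else 0,
        ?_, ?_, ?_, ?_⟩
      · intro h
        have := congrFun h i0.castSucc
        simp at this
      · intro k
        by_cases h1 : k = i0.castSucc <;> by_cases h2 : k = Fin.last n <;> simp [h1, h2]
      · intro j
        rw [Fin.sum_univ_castSucc]
        have hne : (Fin.last n : Fin (n+1)) ≠ i0.castSucc := (Fin.castSucc_lt_last i0).ne'
        have hsum : ∀ i : Fin n,
            (if i.castSucc = i0.castSucc then (1:ℝ) else if i.castSucc = Fin.last n then 1 else 0)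
              * gam αt βt i.castSucc j
            = if i = i0 then gam α β i j else 0 := by
          intro i
          by_cases h : i = i0
          · simp [h, hgold]
          · simp [Fin.castSucc_inj, h, (Fin.castSucc_lt_last i).ne]
        rw [Finset.sum_congr rfl (fun i _ => hsum i), Finset.sum_ite_eq' Finset.univ i0]
        simp [hne, hglast]
      · intro k hk
        by_cases h1 : k = i0.castSucc
        · exact h1 ▸ hi0
        · by_cases h2 : k = Fin.last n
          · exact h2 ▸ hlastP
          · simp [h1, h2] at hk
    · -- i0 has no reactions at all; e_last is a conservation law
      have hα0 : ∀ j, α i0 j = 0 := by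
        intro j
        by_contra hαj
        have hpos : 0 < α i0 j := Nat.pos_of_ne_zero hαj
        obtain ⟨i', hi'P, hαi'⟩ := hPsi j ⟨Fin.last n, hlastP, by simpa [hβnew] using hpos⟩
        rcases Fin.eq_castSucc_or_eq_last i' with ⟨c, rfl⟩ | rfl
        · rw [hαold] at hαi'
          -- c has α c j > 0; by linearity c = i0, contradiction with hi0
          rcases hlin j with ⟨a, b, hab, hA, hB⟩ | ⟨hA, _⟩ | ⟨a, hA, hB⟩
          · have h1 : i0 = a := by
              have := hA i0; by_contra h; simp [h] at this; omega
            have h2 : c = a := by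
              have := hA c; by_contra h; simp [h] at this; omega
            exact hi0 (by rw [h2, ← h1] at hi'P; exact hi'P)
          · rw [hA] at hpos; omega
          · have h1 : i0 = a := by
              have := hA i0; by_contra h; simp [h] at this; omega
            have h2 : c = a := by
              have := hA c; by_contra h; simp [h] at this; omega
            exact hi0 (by rw [h2, ← h1] at hi'P; exact hi'P)
        · rw [hαnew] at hαi'
          -- β i0 j > 0 and α i0 j > 0: impossible for linear reactions
          rcases hlin j with ⟨a, b, hab, hA, hB⟩ | ⟨hA, _⟩ | ⟨a, hA, hB⟩
          · have h1 : i0 = a := by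
              have := hA i0; by_contra h; simp [h] at this; omega
            have h2 : i0 = b := by
              have := hB i0; by_contra h; simp [h] at this; omega
            exact hab (h1 ▸ h2)
          · rw [hA] at hpos; omega
          · rw [hB] at hαi'; omega
      have hβ0 : ∀ j, β i0 j = 0 := by
        have hz : ∑ j, (β i0 j : ℝ) * v j = 0 := by
          rw [← hΓv i0]
          refine Finset.sum_congr rfl fun j _ => ?_
          simp [gam, hα0 j]
        intro j
        have hnn : ∀ j ∈ Finset.univ, 0 ≤ (β i0 j : ℝ) * v j :=
          fun j _ => mul_nonneg (Nat.cast_nonneg _) (hv j).le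
        have h0 := (Finset.sum_eq_zero_iff_of_nonneg hnn).mp hz j (Finset.mem_univ j)
        rcases mul_eq_zero.mp h0 with h | h
        · exact_mod_cast h
        · exact absurd h (hv j).ne'
      refine ⟨fun k => if k = Fin.last n then 1 else 0, ?_, ?_, ?_, ?_⟩
      · intro h
        have := congrFun h (Fin.last n)
        simp at this
      · intro k; by_cases h : k = Fin.last n <;> simp [h]
      · intro j
        rw [Fin.sum_univ_castSucc]
        have hsum : ∀ i : Fin n,
            (if i.castSucc = Fin.last n then (1:ℝ) else 0) * gam αt βt i.castSucc j = 0 := by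
          intro i; simp [(Fin.castSucc_lt_last i).ne]
        rw [Finset.sum_congr rfl (fun i _ => hsum i)]
        simp [gam, hαnew, hβnew, hα0 j, hβ0 j]
      · intro k hk
        by_cases h : k = Fin.last n
        · exact h ▸ hlastP
        · simp [h] at hk
  · -- last ∉ P: restrict to old species
    set Q : Finset (Fin n) := Finset.univ.filter (fun i => i.castSucc ∈ P) with hQ
    have hQsi : isSiphon α β Q := by
      constructor
      · obtain ⟨x, hx⟩ := hPne
        have hxne : x ≠ Fin.last n := fun h => hlastP (h ▸ hx)
        obtain ⟨y, rfl⟩ := Fin.exists_castSucc_eq.mpr hxne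
        exact ⟨y, by simp [hQ, hx]⟩
      · rintro j ⟨i, hi, hβi⟩
        have hiP : i.castSucc ∈ P := by simpa [hQ] using hi
        obtain ⟨i', hi'P, hαi'⟩ := hPsi j ⟨i.castSucc, hiP, by rw [hβold]; exact hβi⟩
        have hi'ne : i' ≠ Fin.last n := fun h => hlastP (h ▸ hi'P)
        obtain ⟨y, rfl⟩ := Fin.exists_castSucc_eq.mpr hi'ne
        exact ⟨y, by simp [hQ, hi'P], by rwa [hαold] at hαi'⟩
    obtain ⟨d, hd0, hdnn, hdcons, hdsupp⟩ := hN Q hQsi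
    refine ⟨Fin.snoc d 0, ?_, ?_, ?_, ?_⟩
    · intro h
      apply hd0; funext i
      have := congrFun h i.castSucc
      simpa using this
    · intro k
      refine Fin.lastCases ?_ ?_ k
      · simp
      · intro i; simpa using hdnn i
    · intro j
      rw [Fin.sum_univ_castSucc]
      simp only [Fin.snoc_castSucc, Fin.snoc_last, zero_mul, add_zero]
      rw [Finset.sum_congr rfl (fun i _ => by rw [hgold])]
      exact hdcons j
    · intro k
      refine Fin.lastCases ?_ ?_ k
      · simp
      · intro i hi
        have : i ∈ Q := hdsupp i (by simpa using hi)
        simpa [hQ] using this
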